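/- Let A, B, C, P be subfields of a common field with C ⊆ A ∩ B, and suppose both A and B are linearly disjoint from P over A ∩ P and B ∩ P respectively ('D-closed'). If the compositum A.P is linearly disjoint from B.P over C.P, then the compositum A.B is linearly disjoint from P over (A∩P).(B∩P); in particular (A.B) ∩ P = (A∩P).(B∩P). -/

import Mathlib

/-- `A` (a subset of `K`) is linearly disjoint from the subfield `B` over the subfield `C`:
every tuple of elements of `A` that is linearly independent over `C` is linearly
independent over `B`. -/
def LinDisjS (K : Type*) [Field K] (A : Set K) (B C : Subfield K) : Prop :=
  ∀ (n : ℕ) (a : Fin n → K), (∀ i, a i ∈ A) →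
    LinearIndependent C a → LinearIndependent B a

/-- Linear disjointness of the subfield `A` from `B` over `C`. -/
def LinDisj (K : Type*) [Field K] (A B C : Subfield K) : Prop :=
  LinDisjS K (A : Set K) B C

section Infra

variable {K : Type*} [Field K]


/-- c-form linear independence over a subfield. -/
def LIc (F : Subfield K) {n : ℕ} (v : Fin n → K) : Prop :=
  ∀ c : Fin n → K, (∀ i, c i ∈ F) → ∑ i, c i * v i = 0 → ∀ i, c i = 0

theorem lic_iff (F : Subfield K) {n : ℕ} (v : Fin n → K) :
    LinearIndependent F v ↔ LIc F v := by
  rw [Fintype.linearIndependent_iff]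
  constructor
  · intro H c hc hsum i
    have := H (fun i => (⟨c i, hc i⟩ : F)) ?_ i
    · exact congrArg Subtype.val this
    · rw [← hsum]; apply Finset.sum_congr rfl; intro i _
      rw [Subfield.smul_def]; rfl
  · intro H g hg i
    have := H (fun i => (g i : K)) (fun i => (g i).2) ?_ i
    · exact Subtype.ext this
    · rw [← hg]; apply Finset.sum_congr rfl; intro i _
      rw [Subfield.smul_def]; rfl

theorem lic_smul (F : Subfield K) {n : ℕ} (v : Fin n → K) {t : K} (ht : t ≠ 0)
    (h : LIc F v) : LIc F (fun i => t * v i) := by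
  intro c hc hsum i
  apply h c hc ?_ i
  have : t * ∑ i, c i * v i = 0 := by
    rw [Finset.mul_sum, ← hsum]; apply Finset.sum_congr rfl; intro i _; ring
  rcases mul_eq_zero.1 this with h' | h'
  · exact absurd h' ht
  · exact h'


/-- mem span from K-coefficients in F -/
theorem mem_span_of_coeffs (F : Subfield K) {r : ℕ} (w : Fin r → K) (c : Fin r → K)
    (hc : ∀ l, c l ∈ F) : ∑ l, c l * w l ∈ Submodule.span F (Set.range w) := by
  rw [Submodule.mem_span_range_iff_exists_fun]
  refine ⟨fun l => ⟨c l, hc l⟩, ?_⟩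
  apply Finset.sum_congr rfl
  intro l _
  simp only [Subfield.smul_def, smul_eq_mul]

theorem span_coeffs (F : Subfield K) {r : ℕ} (w : Fin r → K) (x : K)
    (hx : x ∈ Submodule.span F (Set.range w)) :
    ∃ c : Fin r → K, (∀ l, c l ∈ F) ∧ x = ∑ l, c l * w l := by
  rw [Submodule.mem_span_range_iff_exists_fun] at hx
  obtain ⟨c, hc⟩ := hx
  refine ⟨fun l => (c l : K), fun l => (c l).2, ?_⟩
  rw [← hc]; apply Finset.sum_congr rfl; intro l _; rw [Subfield.smul_def]; rfl

/-- Basis extraction. -/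
theorem extract (F : Subfield K) (X : Set K) {m : ℕ} (v : Fin m → K) (hv : ∀ j, v j ∈ X) :
    ∃ (r : ℕ) (w : Fin r → K) (f : Fin m → Fin r → K),
      (∀ l, w l ∈ X) ∧ LIc F w ∧ (∀ j l, f j l ∈ F) ∧ ∀ j, v j = ∑ l, f j l * w l := by
  classical
  induction m with
  | zero => exact ⟨0, Fin.elim0, fun j => Fin.elim0,
      fun l => l.elim0, fun c _ _ i => i.elim0, fun j => j.elim0, fun j => j.elim0⟩
  | succ m ih =>
    obtain ⟨r, w, f, hwX, hwli, hfF, hrep⟩ := ih (fun j => v j.succ) (fun j => hv j.succ)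
    by_cases hmem : v 0 ∈ Submodule.span F (Set.range w)
    · obtain ⟨c, hcF, hcrep⟩ := span_coeffs F w _ hmem
      refine ⟨r, w, fun j => Fin.cases c (fun j' => f j') j, hwX, hwli,
        fun j => Fin.cases hcF (fun j' => hfF j') j, fun j => Fin.cases hcrep hrep j⟩
    · refine ⟨r + 1, Fin.cons (v 0) w,
        fun j => Fin.cases (Fin.cons 1 0) (fun j' => Fin.cons 0 (f j')) j,
        fun l => Fin.cases (hv 0) hwX l, ?_, ?_, ?_⟩
      · -- LIc of cons
        intro c hc hsum
        have hsum' : c 0 * v 0 + ∑ l, c l.succ * w l = 0 := by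
          rw [← hsum, Fin.sum_univ_succ]; simp
        have hc0 : c 0 = 0 := by
          by_contra hc0
          apply hmem
          have key : ∑ l, (-(c l.succ / c 0)) * w l = (-(c 0)⁻¹) * ∑ l, c l.succ * w l := by
            rw [Finset.mul_sum]
            apply Finset.sum_congr rfl
            intro l _
            ring
          have h2 : ∑ l, c l.succ * w l = -(c 0 * v 0) := by linear_combination hsum'
          have : v 0 = ∑ l, (-(c l.succ / c 0)) * w l := by
            rw [key, h2]
            field_simp
          rw [this]
          exact mem_span_of_coeffs F w _ (fun l => by
            exact F.neg_mem (F.div_mem (hc l.succ) (hc 0)))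
        intro i
        refine Fin.cases hc0 (fun i' => ?_) i
        have : ∑ l, c l.succ * w l = 0 := by rw [hc0] at hsum'; simpa using hsum'
        exact hwli (fun l => c l.succ) (fun l => hc l.succ) this i'
      · intro j l
        refine Fin.cases ?_ (fun j' => ?_) j
        · refine Fin.cases ?_ (fun l' => ?_) l <;> simp [Subfield.one_mem, Subfield.zero_mem]
        · refine Fin.cases ?_ (fun l' => ?_) l
          · simp [Subfield.zero_mem]
          · simpa using hfF j' l'
      · intro j
        refine Fin.cases ?_ (fun j' => ?_) j
        · rw [Fin.sum_univ_succ]; simp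
        · rw [Fin.sum_univ_succ]; simpa using hrep j'

/-- The "ring compositum" as an `X`-submodule spanned by `Y`. -/
def MXY (X Y : Subfield K) : Submodule X K := Submodule.span X (Y : Set K)

theorem mem_MXY_of_X (X Y : Subfield K) {x : K} (hx : x ∈ X) : x ∈ MXY X Y := by
  have : x = (⟨x, hx⟩ : X) • (1 : K) := by simp [Subfield.smul_def]
  rw [this]
  exact Submodule.smul_mem _ _ (Submodule.subset_span Y.one_mem)

theorem mem_MXY_of_Y (X Y : Subfield K) {y : K} (hy : y ∈ Y) : y ∈ MXY X Y :=
  Submodule.subset_span hy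

theorem MXY_mul (X Y : Subfield K) {a b : K} (ha : a ∈ MXY X Y) (hb : b ∈ MXY X Y) :
    a * b ∈ MXY X Y := by
  induction ha using Submodule.span_induction with
  | mem y hy =>
    induction hb using Submodule.span_induction with
    | mem y' hy' => exact Submodule.subset_span (Y.mul_mem hy hy')
    | zero => simpa using Submodule.zero_mem (MXY X Y)
    | add u v _ _ hu hv => rw [mul_add]; exact Submodule.add_mem _ hu hv
    | smul c u _ hu =>
      have hcu : y * (c • u) = c • (y * u) := by
        rw [Subfield.smul_def, Subfield.smul_def, smul_eq_mul, smul_eq_mul]; ring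
      rw [hcu]
      exact Submodule.smul_mem _ _ hu
  | zero => simpa using Submodule.zero_mem (MXY X Y)
  | add u v _ _ hu hv => rw [add_mul]; exact Submodule.add_mem _ hu hv
  | smul c u _ hu =>
    have hcu : (c • u) * b = c • (u * b) := by
      rw [Subfield.smul_def, Subfield.smul_def, smul_eq_mul, smul_eq_mul]; ring
    rw [hcu]
    exact Submodule.smul_mem _ _ hu

/-- `MXY` as a subring. -/
def RXY (X Y : Subfield K) : Subring K where
  carrier := MXY X Y
  zero_mem' := Submodule.zero_mem _
  one_mem' := mem_MXY_of_Y X Y Y.one_mem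
  add_mem' := Submodule.add_mem _
  neg_mem' := Submodule.neg_mem _
  mul_mem' := MXY_mul X Y

theorem sup_eq_closure (X Y : Subfield K) :
    X ⊔ Y = Subfield.closure ((X : Set K) ∪ (Y : Set K)) := by
  rw [Subfield.closure_union, Subfield.closure_eq, Subfield.closure_eq]

/-- Denominator representation for an element of the field compositum. -/
theorem exists_denom (X Y : Subfield K) {z : K} (hz : z ∈ X ⊔ Y) :
    ∃ d : K, d ≠ 0 ∧ d ∈ MXY X Y ∧ d * z ∈ MXY X Y := by
  rw [sup_eq_closure, Subfield.mem_closure_iff] at hz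
  obtain ⟨u, hu, d, hd, hdz⟩ := hz
  have hsub : Subring.closure ((X : Set K) ∪ (Y : Set K)) ≤ RXY X Y := by
    apply Subring.closure_le.2
    rintro x (hx | hx)
    · exact mem_MXY_of_X X Y hx
    · exact mem_MXY_of_Y X Y hx
  by_cases hd0 : d = 0
  · rw [hd0, div_zero] at hdz
    exact ⟨1, one_ne_zero, mem_MXY_of_Y X Y Y.one_mem, by
      rw [← hdz, mul_zero]; exact Submodule.zero_mem _⟩
  · refine ⟨d, hd0, hsub hd, ?_⟩
    rw [← hdz, mul_div_cancel₀ _ hd0]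
    exact hsub hu

/-- Common denominator for a finite family. -/
theorem exists_denom_family (X Y : Subfield K) {ι : Type*} [Fintype ι] (z : ι → K)
    (hz : ∀ i, z i ∈ X ⊔ Y) :
    ∃ d : K, d ≠ 0 ∧ ∀ i, d * z i ∈ MXY X Y := by
  classical
  choose d hd0 hdM hdz using fun i => exists_denom X Y (hz i)
  refine ⟨∏ i, d i, Finset.prod_ne_zero_iff.2 (fun i _ => hd0 i), fun i => ?_⟩
  have : (∏ j, d j) * z i = (∏ j ∈ Finset.univ.erase i, d j) * (d i * z i) := by
    rw [← mul_assoc, Finset.prod_erase_mul _ _ (Finset.mem_univ i)]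
  rw [this]
  exact MXY_mul X Y (Subring.prod_mem (RXY X Y) (fun j _ => hdM j)) (hdz i)

/-- Joint representation of a finite family of elements of `MXY`. -/
theorem rep_family (X Y : Subfield K) {ι : Type*} [Fintype ι] (z : ι → K)
    (hz : ∀ i, z i ∈ MXY X Y) :
    ∃ (m : ℕ) (a : Fin m → K) (v : ι → Fin m → K),
      (∀ j, a j ∈ Y) ∧ (∀ i j, v i j ∈ X) ∧ ∀ i, z i = ∑ j, v i j * a j := by
  classical
  choose t ht htz using fun i => Submodule.mem_span_finite_of_mem_span (hz i)
  set T : Finset K := Finset.univ.biUnion t with hT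
  have hTY : (T : Set K) ⊆ (Y : Set K) := by
    intro x hx
    simp only [hT, Finset.coe_biUnion, Set.mem_iUnion, Finset.mem_coe] at hx
    obtain ⟨i, _, hx⟩ := hx
    exact ht i hx
  obtain ⟨e⟩ : Nonempty (T ≃ Fin T.card) := ⟨T.equivFin⟩
  set a : Fin T.card → K := fun j => ((e.symm j : T) : K) with ha
  have hrange : Set.range a = (T : Set K) := by
    ext x
    constructor
    · rintro ⟨j, rfl⟩; exact (e.symm j).2
    · intro hx; exact ⟨e ⟨x, hx⟩, by simp [ha]⟩
  refine ⟨T.card, a, ?_⟩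
  have hzi : ∀ i, z i ∈ Submodule.span X (Set.range a) := by
    intro i
    rw [hrange]
    exact Submodule.span_mono (fun x hx => Finset.mem_coe.2
      (Finset.mem_biUnion.2 ⟨i, Finset.mem_univ i, hx⟩)) (htz i)
  choose c hc using fun i => (Submodule.mem_span_range_iff_exists_fun X).1 (hzi i)
  refine ⟨fun i j => (c i j : K), fun j => hTY (e.symm j).2, fun i j => (c i j).2, fun i => ?_⟩
  rw [← hc i]
  apply Finset.sum_congr rfl
  intro j _
  simp only [Subfield.smul_def, smul_eq_mul]
theorem rep_sum_swap {n r : ℕ} (p c : Fin n → K) (f : Fin n → Fin r → K) (w : Fin r → K)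
    (hrep : ∀ i, c i = ∑ l, f i l * w l) :
    ∑ i, p i * c i = ∑ l, (∑ i, p i * f i l) * w l := by
  calc ∑ i, p i * c i = ∑ i, ∑ l, (p i * f i l) * w l := by
        apply Finset.sum_congr rfl
        intro i _
        rw [hrep i, Finset.mul_sum]
        apply Finset.sum_congr rfl
        intro l _
        ring
    _ = ∑ l, ∑ i, (p i * f i l) * w l := Finset.sum_comm
    _ = ∑ l, (∑ i, p i * f i l) * w l := by
        apply Finset.sum_congr rfl
        intro l _
        rw [Finset.sum_mul]

/-- Symmetry of linear disjointness. -/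
theorem symmLD (X P F : Subfield K) (hFP : F ≤ P)
    (hld : ∀ (n : ℕ) (a : Fin n → K), (∀ i, a i ∈ X) → LIc F a → LIc P a) :
    ∀ (n : ℕ) (p : Fin n → K), (∀ i, p i ∈ P) → LIc F p → LIc X p := by
  intro n p hp hliF c hc hsum i
  obtain ⟨r, w, f, hwX, hwli, hfF, hrep⟩ := extract F (X : Set K) c hc
  have hsum' : ∑ j, p j * c j = 0 := by
    rw [← hsum]
    apply Finset.sum_congr rfl
    intro j _
    ring
  have hkey : ∑ l, (∑ j, p j * f j l) * w l = 0 := by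
    rw [← rep_sum_swap p c f w hrep, hsum']
  have hinner : ∀ l, ∑ j, p j * f j l = 0 := by
    intro l
    exact hld r w hwX hwli (fun l => ∑ j, p j * f j l)
      (fun l => P.sum_mem (fun j _ => P.mul_mem (hp j) (hFP (hfF j l)))) hkey l
  have hf0 : ∀ j l, f j l = 0 := by
    intro j l
    have hin : ∑ j, f j l * p j = 0 := by
      rw [← hinner l]
      apply Finset.sum_congr rfl
      intro j _
      ring
    exact hliF (fun j => f j l) (fun j => hfF j l) hin j
  rw [hrep i]
  simp [hf0]

/-- Transfer of linear independence to a larger coefficient field. -/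
theorem step_sup (X F G P' : Subfield K) (hFX : F ≤ X) (hGX : G ≤ X)
    (hld : ∀ (m : ℕ) (p : Fin m → K), (∀ j, p j ∈ P') → LIc F p → LIc X p) :
    ∀ (n : ℕ) (a : Fin n → K), (∀ i, a i ∈ X) → LIc (G ⊔ F) a → LIc (G ⊔ P') a := by
  intro n a ha hli c hc hsum i₀
  obtain ⟨d, hd0, hdc⟩ := exists_denom_family G P' c hc
  obtain ⟨m, q, v, hqP, hvG, hdrep⟩ := rep_family G P' (fun i => d * c i) hdc
  obtain ⟨r, q', gm, hq'P, hq'li, hgmF, hqrep⟩ := extract F (P' : Set K) q hqP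
  set e : Fin n → Fin r → K := fun i l => ∑ j, v i j * gm j l with he
  have herep : ∀ i, d * c i = ∑ l, e i l * q' l := by
    intro i
    rw [hdrep i, rep_sum_swap (v i) q gm q' hqrep]
  have heGF : ∀ i l, e i l ∈ G ⊔ F :=
    fun i l => Subfield.sum_mem _ (fun j _ => Subfield.mul_mem _
      (SetLike.le_def.1 le_sup_left (hvG i j))
      (SetLike.le_def.1 le_sup_right (hgmF j l)))
  have heX : ∀ i l, e i l ∈ X :=
    fun i l => X.sum_mem (fun j _ => X.mul_mem (hGX (hvG i j)) (hFX (hgmF j l)))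
  have hkey : ∑ l, (∑ i, a i * e i l) * q' l = 0 := by
    rw [← rep_sum_swap a (fun i => d * c i) e q' herep]
    have : ∑ i, a i * (d * c i) = d * ∑ i, c i * a i := by
      rw [Finset.mul_sum]
      apply Finset.sum_congr rfl
      intro i _
      ring
    rw [this, hsum, mul_zero]
  have hinner : ∀ l, ∑ i, a i * e i l = 0 := by
    intro l
    exact hld r q' hq'P hq'li (fun l => ∑ i, a i * e i l)
      (fun l => X.sum_mem (fun i _ => X.mul_mem (ha i) (heX i l))) hkey l
  have he0 : ∀ l i, e i l = 0 := by
    intro l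
    apply hli (fun i => e i l) (fun i => heGF i l)
    rw [← hinner l]
    apply Finset.sum_congr rfl
    intro i _
    ring
  have : d * c i₀ = 0 := by
    rw [herep i₀]
    simp [he0]
  rcases mul_eq_zero.1 this with h' | h'
  · exact absurd h' hd0
  · exact h'
set_option maxHeartbeats 1000000 in
set_option synthInstance.maxHeartbeats 200000 in
/-- Descent: a matrix with entries in `Q` whose rows are `Q`-linearly independent has
`P`-linearly independent rows, for any subfield `P ≥ Q`. -/
theorem descent (Q P : Subfield K) (hQP : Q ≤ P) {n : ℕ} {κ : Type*} [Fintype κ]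
    (g : Fin n → κ → K)
    (hgQ : ∀ i k, g i k ∈ Q)
    (hrows : ∀ c : Fin n → K, (∀ i, c i ∈ Q) → (∀ k, ∑ i, c i * g i k = 0) → ∀ i, c i = 0)
    (p : Fin n → K) (hp : ∀ i, p i ∈ P) (hrel : ∀ k, ∑ i, p i * g i k = 0) :
    ∀ i, p i = 0 := by
  classical
  letI : Module Q (κ → Q) := Pi.module _ _ _
  set v : Fin n → (κ → Q) := fun i k => ⟨g i k, hgQ i k⟩ with hv
  have hli : LinearIndependent Q v := by
    rw [Fintype.linearIndependent_iff]
    intro c hc i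
    have hck : ∀ k, ∑ j, (c j : K) * g j k = 0 := by
      intro k
      have := congrFun hc k
      rw [Finset.sum_apply] at this
      have : ((∑ j, (c j • v j) k : Q) : K) = 0 := by rw [this]; rfl
      rw [← this]
      push_cast
      rfl
    have := hrows (fun j => (c j : K)) (fun j => (c j).2) hck i
    exact Subtype.ext this
  set W := Submodule.span Q (Set.range v) with hW
  obtain ⟨W', hW'⟩ := Submodule.exists_isCompl W
  set b : Module.Basis (Fin n) Q W := Module.Basis.span hli with hb
  set proj : (κ → Q) →ₗ[Q] W := W.projectionOnto W' hW' with hproj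
  set φ : Fin n → ((κ → Q) →ₗ[Q] Q) := fun i => (b.coord i).comp proj with hφ
  have hφδ : ∀ i j, φ i (v j) = if j = i then 1 else 0 := by
    intro i j
    have h1 : proj (v j) = b j := by
      have : v j = ((b j : W) : κ → Q) := by rw [hb, Module.Basis.span_apply]
      rw [this, hproj]
      exact Submodule.projectionOnto_apply_left hW' (b j)
    rw [hφ]
    simp only [LinearMap.comp_apply, h1, Module.Basis.coord_apply, Module.Basis.repr_self]
    rw [Finsupp.single_apply]
  set G : Fin n → κ → K := fun i k => ((φ i (fun j => if k = j then 1 else 0) : Q) : K)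
    with hG
  have hexp : ∀ i j, ((φ i (v j) : Q) : K) = ∑ k, g j k * G i k := by
    intro i j
    have h1 : φ i (v j) = ∑ k, (v j k) * (φ i (fun j' => if k = j' then 1 else 0)) := by
      conv_lhs => rw [pi_eq_sum_univ (v j)]
      rw [map_sum]
      apply Finset.sum_congr rfl
      intro k _
      rw [map_smul, smul_eq_mul]
    rw [h1]
    push_cast
    rfl
  intro i
  have hS : ∑ j, p j * ((φ i (v j) : Q) : K) = p i := by
    have : ∀ j, p j * ((φ i (v j) : Q) : K) = if j = i then p j else 0 := by
      intro j
      rw [hφδ i j]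
      by_cases hji : j = i <;> simp [hji]
    rw [Finset.sum_congr rfl (fun j _ => this j), Finset.sum_ite_eq' Finset.univ i p]
    simp
  have hS2 : ∑ j, p j * ((φ i (v j) : Q) : K) = ∑ k, (∑ j, p j * g j k) * G i k := by
    calc ∑ j, p j * ((φ i (v j) : Q) : K) = ∑ j, ∑ k, (p j * g j k) * G i k := by
          apply Finset.sum_congr rfl
          intro j _
          rw [hexp i j, Finset.mul_sum]
          apply Finset.sum_congr rfl
          intro k _
          ring
      _ = ∑ k, ∑ j, (p j * g j k) * G i k := Finset.sum_comm
      _ = ∑ k, (∑ j, p j * g j k) * G i k := by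
          apply Finset.sum_congr rfl
          intro k _
          rw [Finset.sum_mul]
  rw [hS2] at hS
  rw [← hS]
  apply Finset.sum_eq_zero
  intro k _
  rw [hrel k, zero_mul]
/-- Vector form: a matrix with entries in `B ⊔ F₁`, whose rows are `Q`-independent,
has `P`-independent rows. -/
theorem cvec (Bf F₁ F₂ Q P : Subfield K)
    (hF1Q : F₁ ≤ Q) (hF2Q : F₂ ≤ Q) (hQP : Q ≤ P)
    (hBP : ∀ (r : ℕ) (e : Fin r → K), (∀ l, e l ∈ Bf) → LIc F₂ e → LIc P e)
    (hBQ : ∀ (r : ℕ) (e : Fin r → K), (∀ l, e l ∈ Bf) → LIc F₂ e → LIc Q e)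
    {n m : ℕ} (w : Fin n → Fin m → K) (hw : ∀ i k, w i k ∈ Bf ⊔ F₁)
    (hrows : ∀ c : Fin n → K, (∀ i, c i ∈ Q) → (∀ k, ∑ i, c i * w i k = 0) → ∀ i, c i = 0)
    (p : Fin n → K) (hp : ∀ i, p i ∈ P) (hrel : ∀ k, ∑ i, p i * w i k = 0) :
    ∀ i, p i = 0 := by
  classical
  obtain ⟨d, hd0, hdw⟩ := exists_denom_family Bf F₁
    (fun ik : Fin n × Fin m => w ik.1 ik.2) (fun ik => hw ik.1 ik.2)
  obtain ⟨m₂, a, v, haF, hvB, hwrep⟩ := rep_family Bf F₁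
    (fun ik : Fin n × Fin m => d * w ik.1 ik.2) hdw
  -- extract an F₂-basis of the `B`-coefficients
  set E := Fintype.equivFin ((Fin n × Fin m) × Fin m₂) with hE
  obtain ⟨r, bb, f, hbbB, hbbli, hfF, hvrep⟩ := extract F₂ (Bf : Set K)
    (fun t => v (E.symm t).1 (E.symm t).2) (fun t => hvB _ _)
  -- g i (k, l) : coefficients in Q
  set g : Fin n → (Fin m × Fin r) → K :=
    fun i kl => ∑ j, a j * f (E ((i, kl.1), j)) kl.2 with hg
  have hgQ : ∀ i kl, g i kl ∈ Q :=
    fun i kl => Q.sum_mem (fun j _ => Q.mul_mem (hF1Q (haF j)) (hF2Q (hfF _ _)))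
  have hwrep' : ∀ i k, d * w i k = ∑ l, (∑ j, a j * f (E ((i, k), j)) l) * bb l := by
    intro i k
    have h1 : ∀ j : Fin m₂, v (i, k) j = ∑ l, f (E ((i, k), j)) l * bb l := by
      intro j
      have := hvrep (E ((i, k), j))
      simpa using this
    have h2 : d * w i k = ∑ j, a j * v (i, k) j := by
      rw [hwrep (i, k)]
      apply Finset.sum_congr rfl
      intro j _
      ring
    rw [h2, rep_sum_swap a (fun j => v (i, k) j) (fun j l => f (E ((i, k), j)) l) bb h1]
  -- P-relation on g
  have hgrel : ∀ kl : Fin m × Fin r, ∑ i, p i * g i kl = 0 := by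
    rintro ⟨k, l⟩
    have hdrel : ∑ i, p i * (d * w i k) = 0 := by
      have : ∑ i, p i * (d * w i k) = d * ∑ i, p i * w i k := by
        rw [Finset.mul_sum]
        apply Finset.sum_congr rfl
        intro i _
        ring
      rw [this, hrel k, mul_zero]
    have := rep_sum_swap p (fun i => d * w i k)
      (fun i l => ∑ j, a j * f (E ((i, k), j)) l) bb (fun i => hwrep' i k)
    rw [hdrel] at this
    have hPcoef : ∀ l', (∑ i, p i * ∑ j, a j * f (E ((i, k), j)) l') ∈ P :=
      fun l' => P.sum_mem (fun i _ => P.mul_mem (hp i)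
        (P.sum_mem (fun j _ => P.mul_mem (hQP (hF1Q (haF j))) (hQP (hF2Q (hfF _ _))))))
    have := hBP r bb hbbB hbbli _ hPcoef this.symm
    exact this l
  -- rows of g are Q-independent
  have hgrows : ∀ c : Fin n → K, (∀ i, c i ∈ Q) →
      (∀ kl : Fin m × Fin r, ∑ i, c i * g i kl = 0) → ∀ i, c i = 0 := by
    intro c hc hcrel
    apply hrows c hc
    intro k
    have hdzero : ∑ i, c i * (d * w i k) = 0 := by
      rw [rep_sum_swap c (fun i => d * w i k)
        (fun i l => ∑ j, a j * f (E ((i, k), j)) l) bb (fun i => hwrep' i k)]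
      apply Finset.sum_eq_zero
      intro l _
      have := hcrel (k, l)
      rw [hg] at this
      simp only at this
      rw [this, zero_mul]
    have : d * ∑ i, c i * w i k = 0 := by
      rw [Finset.mul_sum, ← hdzero]
      apply Finset.sum_congr rfl
      intro i _
      ring
    rcases mul_eq_zero.1 this with h' | h'
    · exact absurd h' hd0
    · exact h'
  exact descent Q P hQP g hgQ hgrows p hp hgrel
theorem main_part1 (A B C P : Subfield K) (hCA : C ≤ A) (hCB : C ≤ B)
    (hA : LinDisjS K (A : Set K) P (A ⊓ P)) (hB : LinDisjS K (B : Set K) P (B ⊓ P))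
    (h : LinDisjS K ((A ⊔ P : Subfield K) : Set K) (B ⊔ P) (C ⊔ P)) :
    ∀ (n : ℕ) (x : Fin n → K), (∀ i, x i ∈ A ⊔ B) → LIc ((A ⊓ P) ⊔ (B ⊓ P)) x →
      LIc P x := by
  classical
  set F₁ := A ⊓ P with hF₁
  set F₂ := B ⊓ P with hF₂
  set Q := F₁ ⊔ F₂ with hQdef
  -- c-forms of the hypotheses
  have hAc : ∀ (n : ℕ) (a : Fin n → K), (∀ i, a i ∈ A) → LIc F₁ a → LIc P a :=
    fun n a ha hli => (lic_iff P a).1 (hA n a ha ((lic_iff F₁ a).2 hli))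
  have hBc : ∀ (n : ℕ) (a : Fin n → K), (∀ i, a i ∈ B) → LIc F₂ a → LIc P a :=
    fun n a ha hli => (lic_iff P a).1 (hB n a ha ((lic_iff F₂ a).2 hli))
  have hc : ∀ (n : ℕ) (a : Fin n → K), (∀ i, a i ∈ A ⊔ P) → LIc (C ⊔ P) a →
      LIc (B ⊔ P) a :=
    fun n a ha hli => (lic_iff (B ⊔ P) a).1 (h n a ha ((lic_iff (C ⊔ P) a).2 hli))
  have hA' := symmLD A P F₁ inf_le_right hAc
  have hB' := symmLD B P F₂ inf_le_right hBc
  -- tuples in B that are F₂-independent are Q-independent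
  have h7B : ∀ (r : ℕ) (e : Fin r → K), (∀ l, e l ∈ B) → LIc F₂ e → LIc Q e := by
    intro r e he hli
    have hld : ∀ (m : ℕ) (p : Fin m → K), (∀ j, p j ∈ F₁) → LIc F₂ p → LIc B p :=
      fun m p hp hli => hB' m p (fun j => SetLike.le_def.1 inf_le_right (hp j)) hli
    have := step_sup B F₂ F₂ F₁ inf_le_left inf_le_left hld r e he
      (by rwa [sup_idem])
    rwa [sup_comm F₂ F₁] at this
  -- tuples in A that are (C ⊔ F₁)-independent are (B ⊔ P)-independent
  have hAtoBP : ∀ (r : ℕ) (e : Fin r → K), (∀ l, e l ∈ A) → LIc (C ⊔ F₁) e →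
      LIc (B ⊔ P) e := by
    intro r e he hli
    have h8 := step_sup A F₁ C P inf_le_left hCA hA' r e he hli
    exact hc r e (fun l => SetLike.le_def.1 le_sup_left (he l)) h8
  -- main argument
  intro n x hx hQli p hp hsum i₀
  obtain ⟨d, hd0, hdx⟩ := exists_denom_family B A x
    (fun i => by rw [sup_comm B A]; exact hx i)
  obtain ⟨m, a, v, haA, hvB, hxrep0⟩ := rep_family B A (fun i => d * x i) hdx
  obtain ⟨r, a', fm, ha'A, ha'li, hfm, harep⟩ := extract (C ⊔ F₁) (A : Set K) a haA
  set w : Fin n → Fin r → K := fun i l => ∑ j, v i j * fm j l with hw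
  have hwmem : ∀ i l, w i l ∈ B ⊔ F₁ := by
    intro i l
    apply Subfield.sum_mem
    intro j _
    apply Subfield.mul_mem
    · exact SetLike.le_def.1 le_sup_left (hvB i j)
    · refine SetLike.le_def.1 ?_ (hfm j l)
      exact sup_le (hCB.trans le_sup_left) le_sup_right
  have hxrep : ∀ i, d * x i = ∑ l, w i l * a' l := by
    intro i
    rw [hxrep0 i, rep_sum_swap (v i) a fm a' harep]
  have ha'BP : LIc (B ⊔ P) a' := hAtoBP r a' ha'A ha'li
  -- P-relation on the rows w
  have hwrel : ∀ l, ∑ i, p i * w i l = 0 := by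
    have hdsum : ∑ i, p i * (d * x i) = 0 := by
      have : ∑ i, p i * (d * x i) = d * ∑ i, p i * x i := by
        rw [Finset.mul_sum]
        apply Finset.sum_congr rfl
        intro i _
        ring
      rw [this, hsum, mul_zero]
    have := rep_sum_swap p (fun i => d * x i) w a' hxrep
    rw [hdsum] at this
    exact ha'BP _ (fun l => Subfield.sum_mem _ (fun i _ => Subfield.mul_mem _
      (SetLike.le_def.1 le_sup_right (hp i))
      (SetLike.le_def.1 (sup_le le_sup_left (inf_le_right.trans le_sup_right)) (hwmem i l))))
      this.symm
  -- rows w are Q-independent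
  have hwrows : ∀ c : Fin n → K, (∀ i, c i ∈ Q) → (∀ l, ∑ i, c i * w i l = 0) →
      ∀ i, c i = 0 := by
    intro c hc' hcrel
    apply hQli c hc'
    have hdzero : ∀ i, c i * (d * x i) = d * (c i * x i) := fun i => by ring
    have : d * ∑ i, c i * x i = 0 := by
      rw [Finset.mul_sum]
      have : ∑ i, d * (c i * x i) = ∑ i, c i * (d * x i) := by
        apply Finset.sum_congr rfl
        intro i _
        ring
      rw [this, rep_sum_swap c (fun i => d * x i) w a' hxrep]
      apply Finset.sum_eq_zero
      intro l _
      rw [hcrel l, zero_mul]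
    rcases mul_eq_zero.1 this with h' | h'
    · exact absurd h' hd0
    · exact h'
  exact cvec B F₁ F₂ Q P le_sup_left le_sup_right (sup_le inf_le_right inf_le_right)
    hBc h7B w hwmem hwrows p hp hwrel i₀

end Infra

theorem stmt14_core {K : Type*} [Field K] (A B C P : Subfield K) (hCA : C ≤ A) (hCB : C ≤ B)
    (hA : LinDisjS K (A : Set K) P (A ⊓ P)) (hB : LinDisjS K (B : Set K) P (B ⊓ P))
    (h : LinDisjS K ((A ⊔ P : Subfield K) : Set K) (B ⊔ P) (C ⊔ P)) :
    LinDisjS K ((A ⊔ B : Subfield K) : Set K) P ((A ⊓ P) ⊔ (B ⊓ P)) ∧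
      (A ⊔ B) ⊓ P = (A ⊓ P) ⊔ (B ⊓ P) := by
  have part1c := main_part1 A B C P hCA hCB hA hB h
  constructor
  · intro n a ha hli
    exact (lic_iff P a).2 (part1c n a ha ((lic_iff _ a).1 hli))
  · apply le_antisymm
    · intro x hx
      rw [Subfield.mem_inf] at hx
      obtain ⟨hxAB, hxP⟩ := hx
      by_contra hxQ
      have hli : LIc ((A ⊓ P) ⊔ (B ⊓ P)) ![(1 : K), x] := by
        intro c hc hsum i
        rw [Fin.sum_univ_two] at hsum
        simp only [Matrix.cons_val_zero, Matrix.cons_val_one, Matrix.head_cons] at hsum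
        have hc1 : c 1 = 0 := by
          by_contra hc1
          apply hxQ
          have hxval : x = -(c 0) / c 1 := by
            field_simp
            linear_combination hsum
          rw [hxval]
          exact Subfield.div_mem _ (Subfield.neg_mem _ (hc 0)) (hc 1)
        have hc0 : c 0 = 0 := by
          rw [hc1] at hsum
          simpa using hsum
        fin_cases i
        · simpa using hc0
        · simpa using hc1
      have hmem : ∀ i, (![(1 : K), x]) i ∈ A ⊔ B := by
        intro i
        fin_cases i
        · simpa using Subfield.one_mem (A ⊔ B)
        · simpa using hxAB
      have hLP := part1c 2 ![(1 : K), x] hmem hli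
      have hcontra := hLP ![x, -1] ?_ ?_ 1
      · simpa using hcontra
      · intro i
        fin_cases i
        · simpa using hxP
        · simpa using Subfield.neg_mem P P.one_mem
      · rw [Fin.sum_univ_two]
        simp
    · exact sup_le (le_inf (inf_le_left.trans le_sup_left) inf_le_right)
        (le_inf (inf_le_left.trans le_sup_right) inf_le_right)

/-- If `A` and `B` are D-closed and `A.P` is linearly disjoint from `B.P` over `C.P`, then
`A.B` is linearly disjoint from `P` over `(A∩P).(B∩P)`; in particular
`(A.B) ∩ P = (A∩P).(B∩P)`. -/
theorem stmt14 (K : Type*) [Field K] (A B C P : Subfield K) (hCA : C ≤ A) (hCB : C ≤ B)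
    (hA : LinDisj K A P (A ⊓ P)) (hB : LinDisj K B P (B ⊓ P))
    (h : LinDisj K (A ⊔ P) (B ⊔ P) (C ⊔ P)) :
    LinDisj K (A ⊔ B) P ((A ⊓ P) ⊔ (B ⊓ P)) ∧ (A ⊔ B) ⊓ P = (A ⊓ P) ⊔ (B ⊓ P) := by
  exact stmt14_core A B C P hCA hCB hA hB h
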